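/- For every real x, the integer translates of the weight function W form a partition of unity: Σ_{i ∈ ℤ} W(x − i) = 1, where all but at most four terms of the sum vanish (only integers i with x − 2 < i < x + 2 contribute). -/
import Mathlib


/-- The piecewise-cubic weight function. -/
noncomputable def W (x : ℝ) : ℝ :=
  if x < -2 then 0
  else if x < -1 then (1/6) * (x + 2)^3
  else if x < 0 then -(1/2) * x^3 - x^2 + 2/3
  else if x < 1 then (1/2) * x^3 - x^2 + 2/3
  else if x < 2 then -(1/6) * (x - 2)^3
  else 0

lemma W_eq_zero {y : ℝ} (h : y ≤ -2 ∨ 2 ≤ y) : W y = 0 := by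
  unfold W
  rcases h with h | h <;> split_ifs <;>
    first
      | rfl
      | (exfalso; linarith)
      | (have he : y = -2 := by linarith
         subst he; norm_num)

lemma W_key {y : ℝ} (hy0 : 0 ≤ y) (hy1 : y < 1) :
    W (y + 1) + W y + W (y - 1) + W (y - 2) = 1 := by
  have e1 : W (y + 1) = -(1/6) * ((y + 1) - 2)^3 := by
    unfold W
    rw [if_neg (by linarith), if_neg (by linarith), if_neg (by linarith),
        if_neg (by linarith), if_pos (by linarith)]
  have e2 : W y = (1/2) * y^3 - y^2 + 2/3 := by
    unfold W
    rw [if_neg (by linarith), if_neg (by linarith), if_neg (by linarith),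
        if_pos (by linarith)]
  have e3 : W (y - 1) = -(1/2) * (y - 1)^3 - (y - 1)^2 + 2/3 := by
    unfold W
    rw [if_neg (by linarith), if_neg (by linarith), if_pos (by linarith)]
  have e4 : W (y - 2) = (1/6) * ((y - 2) + 2)^3 := by
    unfold W
    rw [if_neg (by linarith), if_pos (by linarith)]
  rw [e1, e2, e3, e4]; ring

/-- The integer translates of the weight function `W` form a partition of
unity; only the (at most four) integers `i` with `x − 2 < i < x + 2` can
contribute a nonzero term. -/
theorem weight_partition_of_unity (x : ℝ) :
    (∀ i : ℤ, W (x - i) ≠ 0 → x - 2 < (i : ℝ) ∧ (i : ℝ) < x + 2) ∧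
    ∑' i : ℤ, W (x - i) = 1 := by
  constructor
  · intro i h
    by_contra hc
    push_neg at hc
    apply h
    apply W_eq_zero
    rcases le_or_gt ((i : ℝ)) (x - 2) with h1 | h1
    · right; linarith
    · left; linarith [hc h1]
  · set n : ℤ := ⌊x⌋ with hn
    have h0 : (n : ℝ) ≤ x := Int.floor_le x
    have h1 : x < n + 1 := Int.lt_floor_add_one x
    have hs : ∑' i : ℤ, W (x - i) = ∑ i ∈ ({n - 1, n, n + 1, n + 2} : Finset ℤ), W (x - i) := by
      apply tsum_eq_sum
      intro i hi
      simp only [Finset.mem_insert, Finset.mem_singleton] at hi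
      push_neg at hi
      apply W_eq_zero
      have : i ≤ n - 2 ∨ n + 3 ≤ i := by omega
      rcases this with h | h
      · right
        have : (i : ℝ) ≤ (n : ℝ) - 2 := by exact_mod_cast (by omega : (i : ℤ) ≤ n - 2)
        linarith
      · left
        have : (n : ℝ) + 3 ≤ (i : ℝ) := by exact_mod_cast h
        linarith
    rw [hs]
    rw [Finset.sum_insert (by simp only [Finset.mem_insert, Finset.mem_singleton]; omega), Finset.sum_insert (by simp only [Finset.mem_insert, Finset.mem_singleton]; omega),
        Finset.sum_insert (by simp only [Finset.mem_insert, Finset.mem_singleton]; omega), Finset.sum_singleton]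
    have a1 : x - ((n - 1 : ℤ) : ℝ) = (x - n) + 1 := by push_cast; ring
    have a2 : x - ((n + 1 : ℤ) : ℝ) = (x - n) - 1 := by push_cast; ring
    have a3 : x - ((n + 2 : ℤ) : ℝ) = (x - n) - 2 := by push_cast; ring
    rw [a1, a2, a3]
    have := W_key (y := x - (n : ℝ)) (by linarith) (by linarith)
    linarith
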